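/- arXiv:2108.06780 — 4 statements merged into one kernel-verified Lean document; each statement's English description precedes it below -/
import Mathlib

section
/- Let x ∈ (0,1) be irrational with θ_n = q_n x − p_n. Then for every n ≥ 1, the series ∑_{k=n}^∞ a_k |θ_{k−1}| converges and equals |θ_{n−2}| + |θ_{n−1}|. -/
open scoped BigOperators
open Filter Topology Finset

/-- The Gauss map `x ↦ {1/x}` (with `T 0 = 0`). -/
noncomputable def gauss (x : ℝ) : ℝ := Int.fract (1 / x)

/-- `cf x n = (p_{n-1}, q_{n-1})`, the continued fraction convergents of `x`,
with `p_{-1} = 1, q_{-1} = 0, p_0 = 0, q_0 = 1`,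
`p_{k+1} = a_{k+1} p_k + p_{k-1}`, `q_{k+1} = a_{k+1} q_k + q_{k-1}`,
where `a_{k+1} = ⌊1 / T^k x⌋`. -/
noncomputable def cf (x : ℝ) : ℕ → ℤ × ℤ
  | 0 => (1, 0)
  | 1 => (0, 1)
  | n + 2 => (⌊1 / gauss^[n] x⌋ * (cf x (n + 1)).1 + (cf x n).1,
              ⌊1 / gauss^[n] x⌋ * (cf x (n + 1)).2 + (cf x n).2)

/-- `pcf x n = p_{n-1}`. -/
noncomputable def pcf (x : ℝ) (n : ℕ) : ℤ := (cf x n).1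

/-- `qcf x n = q_{n-1}`. -/
noncomputable def qcf (x : ℝ) (n : ℕ) : ℤ := (cf x n).2

/-- `acf x i = a_i = ⌊1 / T^{i-1} x⌋`, the `i`-th partial quotient (for `i ≥ 1`). -/
noncomputable def acf (x : ℝ) (i : ℕ) : ℤ := ⌊1 / gauss^[i - 1] x⌋

/-- `absθ x n = |θ_{n-1}| = |q_{n-1} x - p_{n-1}|` (so `absθ x 0 = 1`, `absθ x 1 = |x|`). -/
noncomputable def absθ (x : ℝ) (n : ℕ) : ℝ := |(qcf x n : ℝ) * x - (pcf x n : ℝ)|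


/-- products of Gauss iterates -/
noncomputable def Pp (x : ℝ) (n : ℕ) : ℝ := ∏ i ∈ Finset.range n, gauss^[i] x

lemma gauss_mem {y : ℝ} (h : Irrational y) (h0 : 0 < y) (h1 : y < 1) :
    Irrational (gauss y) ∧ 0 < gauss y ∧ gauss y < 1 := by
  have hinv : Irrational (1 / y) := by
    simpa [one_div] using h.inv
  have hg : Irrational (gauss y) := by
    unfold gauss Int.fract
    exact Irrational.sub_intCast hinv _
  refine ⟨hg, ?_, Int.fract_lt_one _⟩
  rcases lt_or_eq_of_le (Int.fract_nonneg (1 / y)) with hlt | heq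
  · exact hlt
  · exfalso
    have : (1 / y) = ⌊(1 / y)⌋ := by
      have := Int.fract_eq_iff.mp heq.symm
      unfold Int.fract at heq
      linarith [heq]
    exact hinv.ne_int _ this

lemma gy_mem (x : ℝ) (hirr : Irrational x) (hx0 : 0 < x) (hx1 : x < 1) :
    ∀ n, Irrational (gauss^[n] x) ∧ 0 < gauss^[n] x ∧ gauss^[n] x < 1 := by
  intro n
  induction n with
  | zero => exact ⟨hirr, hx0, hx1⟩
  | succ k ih =>
    rw [Function.iterate_succ_apply']
    exact gauss_mem ih.1 ih.2.1 ih.2.2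

section main
variable {x : ℝ} (hirr : Irrational x) (hx0 : 0 < x) (hx1 : x < 1)
include hirr hx0 hx1

lemma Pp_pos : ∀ n, 0 < Pp x n := by
  intro n
  exact Finset.prod_pos fun i _ => (gy_mem x hirr hx0 hx1 i).2.1

lemma gauss_succ (n : ℕ) :
    gauss^[n + 1] x = 1 / gauss^[n] x - ⌊1 / gauss^[n] x⌋ := by
  rw [Function.iterate_succ_apply']
  rfl

lemma Dlem : ∀ n, (qcf x n : ℝ) * x - (pcf x n : ℝ) = (-1) ^ (n + 1) * Pp x n := by
  have key : ∀ n, ((qcf x n : ℝ) * x - (pcf x n : ℝ) = (-1) ^ (n + 1) * Pp x n) ∧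
      ((qcf x (n+1) : ℝ) * x - (pcf x (n+1) : ℝ) = (-1) ^ (n + 2) * Pp x (n+1)) := by
    intro n
    induction n with
    | zero =>
      constructor
      · simp [qcf, pcf, cf, Pp]
      · simp [qcf, pcf, cf, Pp]
    | succ k ih =>
      refine ⟨ih.2, ?_⟩
      have h1 : qcf x (k + 2) = ⌊1 / gauss^[k] x⌋ * qcf x (k + 1) + qcf x k := rfl
      have h2 : pcf x (k + 2) = ⌊1 / gauss^[k] x⌋ * pcf x (k + 1) + pcf x k := rfl
      have hy : gauss^[k] x ≠ 0 := ne_of_gt (gy_mem x hirr hx0 hx1 k).2.1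
      have hP1 : Pp x (k+1) = Pp x k * gauss^[k] x := Finset.prod_range_succ _ _
      have hP2 : Pp x (k+2) = Pp x (k+1) * gauss^[k+1] x := Finset.prod_range_succ _ _
      have hfr := gauss_succ hirr hx0 hx1 k
      have e1 := ih.1
      have e2 := ih.2
      push_cast [h1, h2]
      have : (⌊1 / gauss^[k] x⌋ : ℝ) * ((qcf x (k+1) : ℝ) * x - (pcf x (k+1) : ℝ))
          + ((qcf x k : ℝ) * x - (pcf x k : ℝ)) = (-1) ^ (k + 3) * Pp x (k+2) := by
        rw [e1, e2, hP2, hfr, hP1]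
        field_simp
        ring
      linear_combination this
  exact fun n => (key n).1

lemma absθ_eq (n : ℕ) : absθ x n = Pp x n := by
  rw [absθ, Dlem hirr hx0 hx1, abs_mul, abs_pow, abs_neg, abs_one, one_pow, one_mul,
    abs_of_pos (Pp_pos hirr hx0 hx1 n)]

lemma telescope (m : ℕ) :
    (acf x (m + 1) : ℝ) * Pp x (m + 1) = Pp x m - Pp x (m + 2) := by
  have hy : gauss^[m] x ≠ 0 := ne_of_gt (gy_mem x hirr hx0 hx1 m).2.1
  have hP1 : Pp x (m+1) = Pp x m * gauss^[m] x := Finset.prod_range_succ _ _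
  have hP2 : Pp x (m+2) = Pp x (m+1) * gauss^[m+1] x := Finset.prod_range_succ _ _
  have hfr := gauss_succ hirr hx0 hx1 m
  have ha : acf x (m + 1) = ⌊1 / gauss^[m] x⌋ := by simp [acf]
  rw [ha, hP2, hfr, hP1]
  field_simp
  ring

lemma Pp_antitone : ∀ m, Pp x (m + 1) ≤ Pp x m := by
  intro m
  have hP1 : Pp x (m+1) = Pp x m * gauss^[m] x := Finset.prod_range_succ _ _
  nlinarith [Pp_pos hirr hx0 hx1 m, (gy_mem x hirr hx0 hx1 m).2.2,
    (gy_mem x hirr hx0 hx1 m).2.1]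

lemma Pp_half (m : ℕ) : Pp x (m + 2) ≤ Pp x m * (1 / 2) := by
  have hy0 := (gy_mem x hirr hx0 hx1 m).2.1
  have hy1 := (gy_mem x hirr hx0 hx1 m).2.2
  have hy0' := (gy_mem x hirr hx0 hx1 (m+1)).2.1
  have hy1' := (gy_mem x hirr hx0 hx1 (m+1)).2.2
  have hP1 : Pp x (m+1) = Pp x m * gauss^[m] x := Finset.prod_range_succ _ _
  have hP2 : Pp x (m+2) = Pp x (m+1) * gauss^[m+1] x := Finset.prod_range_succ _ _
  have hfr := gauss_succ hirr hx0 hx1 m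
  have ha : (1 : ℝ) ≤ ⌊1 / gauss^[m] x⌋ := by
    have h1 : ((1 : ℤ) : ℝ) ≤ 1 / gauss^[m] x := by
      rw [le_div_iff₀ hy0]; push_cast; linarith
    exact_mod_cast Int.le_floor.mpr h1
  have hprod : gauss^[m] x * gauss^[m + 1] x ≤ 1 / 2 := by
    rcases le_or_gt (gauss^[m] x) (1/2) with h | h
    · nlinarith
    · have heq : gauss^[m] x * gauss^[m + 1] x
          = 1 - gauss^[m] x * ⌊1 / gauss^[m] x⌋ := by
        rw [hfr]; field_simp
      rw [heq]; nlinarith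
  have hPm := Pp_pos hirr hx0 hx1 m
  calc Pp x (m+2) = Pp x m * (gauss^[m] x * gauss^[m+1] x) := by rw [hP2, hP1]; ring
    _ ≤ Pp x m * (1/2) := by nlinarith

lemma Pp_le (m : ℕ) : Pp x m ≤ (1 / 2 : ℝ) ^ (m / 2) := by
  induction m using Nat.strong_induction_on with
  | _ m ih =>
    match m with
    | 0 => simp [Pp]
    | 1 =>
      have : Pp x 1 = x := by simp [Pp]
      rw [this]; simpa using hx1.le
    | (k + 2) =>
      have h1 := Pp_half hirr hx0 hx1 k
      have h2 := ih k (by omega)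
      have hk : (k + 2) / 2 = k / 2 + 1 := by omega
      rw [hk, pow_succ]
      nlinarith [Pp_pos hirr hx0 hx1 k]

lemma Pp_tendsto : Tendsto (Pp x) atTop (𝓝 0) := by
  have h1 : Tendsto (fun m : ℕ => (1 / 2 : ℝ) ^ (m / 2)) atTop (𝓝 0) := by
    have hd : Tendsto (fun m : ℕ => m / 2) atTop atTop := by
      refine tendsto_atTop_atTop.mpr fun b => ⟨2 * b, fun n hn => ?_⟩
      omega
    exact (tendsto_pow_atTop_nhds_zero_of_lt_one (by norm_num) (by norm_num)).comp hd
  refine tendsto_of_tendsto_of_tendsto_of_le_of_le tendsto_const_nhds h1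
    (fun m => (Pp_pos hirr hx0 hx1 m).le) (fun m => Pp_le hirr hx0 hx1 m)

end main

/-- for irrational `x ∈ (0,1)` and every `n ≥ 1`,
`∑_{k=n}^∞ a_k |θ_{k-1}|` converges and equals `|θ_{n-2}| + |θ_{n-1}|`. -/
theorem theta_tail_sum (x : ℝ) (hirr : Irrational x)
    (hx0 : 0 < x) (hx1 : x < 1) (n : ℕ) (hn : 1 ≤ n) :
    HasSum (fun j : ℕ => (acf x (n + j) : ℝ) * absθ x (n + j))
      (absθ x (n - 1) + absθ x n) := by
  obtain ⟨m, rfl⟩ : ∃ m, n = m + 1 := ⟨n - 1, by omega⟩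
  have hterm : ∀ j : ℕ, (acf x (m + 1 + j) : ℝ) * absθ x (m + 1 + j)
      = Pp x (m + j) - Pp x (m + j + 2) := by
    intro j
    rw [absθ_eq hirr hx0 hx1]
    have : m + 1 + j = (m + j) + 1 := by omega
    rw [this]
    exact telescope hirr hx0 hx1 (m + j)
  have hnonneg : ∀ j : ℕ, 0 ≤ (acf x (m + 1 + j) : ℝ) * absθ x (m + 1 + j) := by
    intro j
    rw [hterm j]
    have h1 := Pp_antitone hirr hx0 hx1 (m + j)
    have h2 := Pp_antitone hirr hx0 hx1 (m + j + 1)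
    linarith
  rw [hasSum_iff_tendsto_nat_of_nonneg hnonneg]
  have hpartial : ∀ N : ℕ, ∑ j ∈ Finset.range N, (acf x (m + 1 + j) : ℝ) * absθ x (m + 1 + j)
      = Pp x m + Pp x (m + 1) - Pp x (m + N) - Pp x (m + N + 1) := by
    intro N
    induction N with
    | zero => simp
    | succ k ih =>
      rw [Finset.sum_range_succ, ih, hterm k]
      have e : m + k + 2 = m + k + 1 + 1 := rfl
      rw [e]
      ring
  have habs : absθ x (m + 1 - 1) + absθ x (m + 1) = Pp x m + Pp x (m + 1) := by
    rw [absθ_eq hirr hx0 hx1, absθ_eq hirr hx0 hx1]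
    norm_num
  rw [habs]
  simp only [hpartial]
  have hT := Pp_tendsto hirr hx0 hx1
  have t1 : Tendsto (fun N : ℕ => Pp x (m + N)) atTop (𝓝 0) :=
    hT.comp (tendsto_atTop_atTop.mpr fun b => ⟨b, fun n hn => by omega⟩)
  have t2 : Tendsto (fun N : ℕ => Pp x (m + N + 1)) atTop (𝓝 0) :=
    hT.comp (tendsto_atTop_atTop.mpr fun b => ⟨b, fun n hn => by omega⟩)
  have := ((tendsto_const_nhds : Tendsto (fun _ : ℕ => Pp x m + Pp x (m+1)) atTop (𝓝 _)).sub t1).sub t2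
  simpa using this
end

section
/- Existence of Ostrowski expansion: let x ∈ (0,1) be irrational and y ∈ [0,1). Define (x_0,y_0)=(x,y) and (x_i,y_i)=S^i(x,y) for the Ostrowski map S(x,y)=({1/x},{y/x}). Let b_i = ⌊y_{i−1}/x_{i−1}⌋. Then y = ∑_{i=1}^∞ b_i |θ_{i−1}|, where θ_n = q_n x − p_n. -/
open scoped BigOperators

/-- The Ostrowski map `S(x,y) = ({1/x}, {y/x})`, with `S(0,y) = (0,0)`. -/
noncomputable def ost (p : ℝ × ℝ) : ℝ × ℝ :=
  if p.1 = 0 then (0, 0) else (Int.fract (1 / p.1), Int.fract (p.2 / p.1))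

/-- `adig x y n = a_{n+1} = ⌊1 / x_n⌋` where `(x_n, y_n) = S^n (x,y)`. -/
noncomputable def adig (x y : ℝ) (n : ℕ) : ℤ := ⌊1 / (ost^[n] (x, y)).1⌋

/-- `bdig x y n = b_{n+1} = ⌊y_n / x_n⌋` where `(x_n, y_n) = S^n (x,y)`. -/
noncomputable def bdig (x y : ℝ) (n : ℕ) : ℤ := ⌊(ost^[n] (x, y)).2 / (ost^[n] (x, y)).1⌋

section aux

variable {x y : ℝ}

/-- irrationality and bounds for gauss iterates -/
lemma gauss_iter (hirr : Irrational x) (hx0 : 0 < x) (hx1 : x < 1) (n : ℕ) :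
    Irrational (gauss^[n] x) ∧ 0 < gauss^[n] x ∧ gauss^[n] x < 1 := by
  induction n with
  | zero => exact ⟨hirr, hx0, hx1⟩
  | succ n ih =>
    obtain ⟨hi, h0, h1⟩ := ih
    rw [Function.iterate_succ_apply']
    have hinv : Irrational (1 / gauss^[n] x) := by rw [one_div]; exact hi.inv
    have hfr : Irrational (gauss (gauss^[n] x)) := by
      rw [gauss, Int.fract]; exact hinv.sub_intCast _
    refine ⟨hfr, ?_, Int.fract_lt_one _⟩
    rcases lt_or_eq_of_le (Int.fract_nonneg (1 / gauss^[n] x)) with h | h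
    · exact h
    · exfalso
      rw [Int.fract] at h
      exact hinv.ne_int ⌊1 / gauss^[n] x⌋ (by linarith)

/-- first coordinate of ost iterates is the gauss iterate -/
lemma ost_fst (hirr : Irrational x) (hx0 : 0 < x) (hx1 : x < 1) (n : ℕ) :
    (ost^[n] (x, y)).1 = gauss^[n] x := by
  induction n with
  | zero => rfl
  | succ n ih =>
    rw [Function.iterate_succ_apply', Function.iterate_succ_apply', ost, ih,
      if_neg (ne_of_gt (gauss_iter hirr hx0 hx1 n).2.1)]
    rfl

/-- second coordinate of ost iterates lies in [0,1) and recurrence -/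
lemma ost_snd (hirr : Irrational x) (hx0 : 0 < x) (hx1 : x < 1) (hy0 : 0 ≤ y) (hy1 : y < 1)
    (n : ℕ) : 0 ≤ (ost^[n] (x, y)).2 ∧ (ost^[n] (x, y)).2 < 1 := by
  induction n with
  | zero => exact ⟨hy0, hy1⟩
  | succ n _ =>
    rw [Function.iterate_succ_apply', ost, if_neg (by
      rw [ost_fst hirr hx0 hx1 n]; exact ne_of_gt (gauss_iter hirr hx0 hx1 n).2.1)]
    exact ⟨Int.fract_nonneg _, Int.fract_lt_one _⟩

lemma ost_snd_rec (hirr : Irrational x) (hx0 : 0 < x) (hx1 : x < 1) (n : ℕ) :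
    (ost^[n+1] (x, y)).2 = Int.fract ((ost^[n] (x, y)).2 / gauss^[n] x) := by
  rw [Function.iterate_succ_apply', ost, if_neg (by
    rw [ost_fst hirr hx0 hx1 n]; exact ne_of_gt (gauss_iter hirr hx0 hx1 n).2.1),
    ost_fst hirr hx0 hx1 n]

/-- the key digit relation: y_n = g_n * (b_{n+1} + y_{n+1}) -/
lemma digit_rel (hirr : Irrational x) (hx0 : 0 < x) (hx1 : x < 1) (n : ℕ) :
    (ost^[n] (x, y)).2 = gauss^[n] x * ((bdig x y n : ℝ) + (ost^[n+1] (x, y)).2) := by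
  have hg := (gauss_iter hirr hx0 hx1 n).2.1
  rw [ost_snd_rec hirr hx0 hx1 n, bdig, ost_fst hirr hx0 hx1 n, Int.fract]
  field_simp
  ring

/-- signed theta formula : q_{n-1} x - p_{n-1} = (-1)^{n+1} ∏_{k<n} g_k -/
lemma theta_formula (hirr : Irrational x) (hx0 : 0 < x) (hx1 : x < 1) (n : ℕ) :
    (qcf x n : ℝ) * x - (pcf x n : ℝ) =
      (-1 : ℝ) ^ (n + 1) * ∏ k ∈ Finset.range n, gauss^[k] x := by
  induction n using Nat.twoStepInduction with
  | zero => simp [qcf, pcf, cf]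
  | one => simp [qcf, pcf, cf]
  | more n ih2 ih1 =>
    have hg := (gauss_iter hirr hx0 hx1 n).2.1
    have hrec : gauss^[n+1] x = 1 / gauss^[n] x - (⌊1 / gauss^[n] x⌋ : ℝ) := by
      rw [Function.iterate_succ_apply', gauss, Int.fract]
    have hq : (qcf x (n+2) : ℝ) = (⌊1 / gauss^[n] x⌋ : ℝ) * (qcf x (n+1) : ℝ) + (qcf x n : ℝ) := by
      simp [qcf, cf]
    have hp : (pcf x (n+2) : ℝ) = (⌊1 / gauss^[n] x⌋ : ℝ) * (pcf x (n+1) : ℝ) + (pcf x n : ℝ) := by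
      simp [pcf, cf]
    have key : (qcf x (n+2) : ℝ) * x - (pcf x (n+2) : ℝ) =
        (⌊1 / gauss^[n] x⌋ : ℝ) * ((qcf x (n+1) : ℝ) * x - pcf x (n+1))
          + ((qcf x n : ℝ) * x - pcf x n) := by
      rw [hq, hp]; ring
    have hP1 : ∏ k ∈ Finset.range (n+1), gauss^[k] x =
        (∏ k ∈ Finset.range n, gauss^[k] x) * gauss^[n] x := Finset.prod_range_succ _ _
    have hP2 : ∏ k ∈ Finset.range (n+2), gauss^[k] x =
        (∏ k ∈ Finset.range n, gauss^[k] x) * gauss^[n] x * gauss^[n+1] x := by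
      rw [Finset.prod_range_succ, hP1]
    rw [key, ih1, ih2, hP1, hP2, hrec]
    have hkey : gauss^[n] x * (1 / gauss^[n] x - (⌊1 / gauss^[n] x⌋ : ℝ)) =
        1 - gauss^[n] x * (⌊1 / gauss^[n] x⌋ : ℝ) := by field_simp
    rw [mul_assoc, hkey]
    ring

lemma absθ_eq_s6 (hirr : Irrational x) (hx0 : 0 < x) (hx1 : x < 1) (n : ℕ) :
    absθ x n = ∏ k ∈ Finset.range n, gauss^[k] x := by
  rw [absθ, theta_formula hirr hx0 hx1 n, abs_mul, abs_pow, abs_neg, abs_one, one_pow, one_mul]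
  exact abs_of_pos (Finset.prod_pos fun k _ => (gauss_iter hirr hx0 hx1 k).2.1)

end aux

/-- existence of the Ostrowski expansion:
`y = ∑_{i=1}^∞ b_i |θ_{i-1}|` where `b_i = ⌊y_{i-1}/x_{i-1}⌋`. -/
theorem ostrowski_expansion_exists (x y : ℝ) (hirr : Irrational x)
    (hx0 : 0 < x) (hx1 : x < 1) (hy0 : 0 ≤ y) (hy1 : y < 1) :
    HasSum (fun i : ℕ => (bdig x y i : ℝ) * absθ x (i + 1)) y := by
  set Q : ℕ → ℝ := fun n => ∏ k ∈ Finset.range n, gauss^[k] x with hQ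
  have hg0 : ∀ n, 0 < gauss^[n] x := fun n => (gauss_iter hirr hx0 hx1 n).2.1
  have hg1 : ∀ n, gauss^[n] x < 1 := fun n => (gauss_iter hirr hx0 hx1 n).2.2
  have hQ0 : ∀ n, 0 < Q n := fun n => Finset.prod_pos fun k _ => hg0 k
  have hQ1 : ∀ n, Q n ≤ 1 := by
    intro n
    induction n with
    | zero => simp [hQ]
    | succ n ih =>
      have : Q (n+1) = Q n * gauss^[n] x := Finset.prod_range_succ _ _
      nlinarith [hg0 n, hg1 n, hQ0 n]
  -- partial sum identity
  have hps : ∀ n, ∑ i ∈ Finset.range n, (bdig x y i : ℝ) * absθ x (i + 1) =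
      y - (ost^[n] (x, y)).2 * Q n := by
    intro n
    induction n with
    | zero => simp [hQ]
    | succ n ih =>
      rw [Finset.sum_range_succ, ih, absθ_eq_s6 hirr hx0 hx1 (n+1)]
      have h1 : Q (n+1) = Q n * gauss^[n] x := Finset.prod_range_succ _ _
      have h2 := digit_rel (y := y) hirr hx0 hx1 n
      have : (∏ k ∈ Finset.range (n+1), gauss^[k] x) = Q (n+1) := rfl
      rw [this, h1, h2]
      ring
  -- Q tendsto 0
  have hQhalf : ∀ n, Q (n + 2) ≤ Q n / 2 := by
    intro n
    have h1 : Q (n+2) = Q n * (gauss^[n] x * gauss^[n+1] x) := by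
      show (∏ k ∈ Finset.range (n+2), gauss^[k] x) = (∏ k ∈ Finset.range n, gauss^[k] x) * _
      rw [Finset.prod_range_succ, Finset.prod_range_succ]; ring
    have hrec : gauss^[n+1] x = 1 / gauss^[n] x - (⌊1 / gauss^[n] x⌋ : ℝ) := by
      rw [Function.iterate_succ_apply', gauss, Int.fract]
    have ha : (1 : ℤ) ≤ ⌊1 / gauss^[n] x⌋ := by
      apply Int.le_floor.2
      rw [Int.cast_one]
      rw [le_div_iff₀ (hg0 n), one_mul]
      exact le_of_lt (hg1 n)
    have ha' : (1 : ℝ) ≤ (⌊1 / gauss^[n] x⌋ : ℝ) := by exact_mod_cast ha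
    have hprod : gauss^[n] x * gauss^[n+1] x ≤ 1 / 2 := by
      rw [hrec]
      have hgn := hg0 n
      rcases le_or_gt (1/2 : ℝ) (gauss^[n] x) with h | h
      · have : gauss^[n] x * (1 / gauss^[n] x - (⌊1 / gauss^[n] x⌋ : ℝ)) =
            1 - gauss^[n] x * (⌊1 / gauss^[n] x⌋ : ℝ) := by field_simp
        rw [this]
        nlinarith
      · have hlt : gauss^[n+1] x < 1 := hg1 (n+1)
        rw [← hrec]
        nlinarith [hg0 (n+1)]
    nlinarith [hQ0 n, hg0 n, hg0 (n+1)]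
  have hQanti : ∀ n, Q (n+1) ≤ Q n := by
    intro n
    have h1 : Q (n+1) = Q n * gauss^[n] x := Finset.prod_range_succ _ _
    nlinarith [hQ0 n, hg1 n, hg0 n]
  have hQanti' : Antitone Q := antitone_nat_of_succ_le hQanti
  have hQbound : ∀ m, Q (2 * m) ≤ (1/2 : ℝ) ^ m := by
    intro m
    induction m with
    | zero => simpa using hQ1 0
    | succ m ih =>
      have : 2 * (m + 1) = 2 * m + 2 := by ring
      rw [this, pow_succ]
      have := hQhalf (2 * m)
      nlinarith [hQ0 (2*m)]
  have hhalf : Filter.Tendsto (fun n : ℕ => (1/2 : ℝ) ^ (n / 2)) Filter.atTop (nhds 0) := by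
    apply (tendsto_pow_atTop_nhds_zero_of_lt_one (by norm_num) (by norm_num)).comp
    exact Filter.tendsto_atTop_atTop.2 fun b => ⟨2 * b, fun a ha => by omega⟩
  have hQtend : Filter.Tendsto Q Filter.atTop (nhds 0) := by
    apply squeeze_zero (fun n => le_of_lt (hQ0 n)) (fun n => ?_) hhalf
    calc Q n ≤ Q (2 * (n / 2)) := hQanti' (by omega)
      _ ≤ (1/2 : ℝ) ^ (n / 2) := hQbound _
  -- nonnegativity of terms
  have hnn : ∀ i, 0 ≤ (bdig x y i : ℝ) * absθ x (i + 1) := by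
    intro i
    apply mul_nonneg _ (abs_nonneg _)
    have hb : (0 : ℤ) ≤ bdig x y i := by
      rw [bdig]
      apply Int.floor_nonneg.2
      apply div_nonneg (ost_snd hirr hx0 hx1 hy0 hy1 i).1
      rw [ost_fst hirr hx0 hx1 i]
      exact le_of_lt (hg0 i)
    exact_mod_cast hb
  rw [hasSum_iff_tendsto_nat_of_nonneg hnn]
  have : (fun n => ∑ i ∈ Finset.range n, (bdig x y i : ℝ) * absθ x (i + 1)) =
      fun n => y - (ost^[n] (x, y)).2 * Q n := funext hps
  rw [this]
  have htail : Filter.Tendsto (fun n => (ost^[n] (x, y)).2 * Q n) Filter.atTop (nhds 0) := by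
    apply squeeze_zero (fun n => mul_nonneg (ost_snd hirr hx0 hx1 hy0 hy1 n).1 (le_of_lt (hQ0 n)))
      (fun n => ?_) hQtend
    have := (ost_snd hirr hx0 hx1 hy0 hy1 n).2
    nlinarith [hQ0 n]
  have := (tendsto_const_nhds (x := y) (f := Filter.atTop (α := ℕ))).sub htail
  simpa using this
end

section
/- For irrational x ∈ (0,1) and y ∈ [0,1), a_i ≠ b_i for infinitely many odd indices i and for infinitely many even indices i, where (a_i,b_i) are the digits of the Ostrowski expansion of (x,y). -/
open scoped BigOperators

/-- Invariant preserved by the Ostrowski map. -/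
def OstInv (p : ℝ × ℝ) : Prop :=
  Irrational p.1 ∧ 0 < p.1 ∧ p.1 < 1 ∧ 0 ≤ p.2 ∧ p.2 < 1

lemma irrational_fract {t : ℝ} (h : Irrational t) : Irrational (Int.fract t) := by
  rw [Int.fract]
  exact h.sub_intCast _

lemma ostInv_step {p : ℝ × ℝ} (h : OstInv p) : OstInv (ost p) := by
  obtain ⟨hirr, h0, h1, hy0, hy1⟩ := h
  have hne : p.1 ≠ 0 := ne_of_gt h0
  have hinv : Irrational (1 / p.1) := by
    rw [one_div]; exact hirr.inv
  rw [ost, if_neg hne]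
  refine ⟨irrational_fract hinv, ?_, Int.fract_lt_one _, Int.fract_nonneg _, Int.fract_lt_one _⟩
  exact lt_of_le_of_ne (Int.fract_nonneg _) (Ne.symm (irrational_fract hinv).ne_zero)

lemma ostInv_iterate {p : ℝ × ℝ} (h : OstInv p) (n : ℕ) : OstInv (ost^[n] p) := by
  induction n with
  | zero => exact h
  | succ n ih => rw [Function.iterate_succ_apply']; exact ostInv_step ih

/-- The two-step growth lemma: if the digits agree at this step,
`1 - y` more than doubles after two steps. -/
lemma ost_key_step {p : ℝ × ℝ} (h : OstInv p)
    (heq : ⌊(1 : ℝ) / p.1⌋ = ⌊p.2 / p.1⌋) :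
    2 * (1 - p.2) < 1 - (ost (ost p)).2 := by
  obtain ⟨hirr, h0, h1, hy0, hy1⟩ := h
  have hne : p.1 ≠ 0 := ne_of_gt h0
  set u : ℝ := p.1 with hu
  set w : ℝ := p.2 with hw
  set a : ℤ := ⌊(1 : ℝ) / u⌋ with ha
  set u' : ℝ := Int.fract (1 / u) with hu'
  set w' : ℝ := Int.fract (w / u) with hw'
  have hostp : ost p = (u', w') := by rw [ost, if_neg hne]
  have hu'irr : Irrational u' := by
    rw [hu']
    exact irrational_fract (by rw [one_div]; exact hirr.inv)
  have hu'0 : 0 < u' := lt_of_le_of_ne (Int.fract_nonneg _) (Ne.symm hu'irr.ne_zero)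
  have hu'1 : u' < 1 := Int.fract_lt_one _
  have hu'eq : u' = 1 / u - a := by rw [hu', Int.fract, ha]
  have hw'eq : w' = w / u - a := by rw [hw', Int.fract, ← heq, ha]
  have ha1 : (1 : ℤ) ≤ a := by
    rw [ha]
    exact Int.le_floor.mpr (by
      push_cast
      rw [le_div_iff₀ h0]
      linarith)
  have hw'0 : 0 ≤ w' := Int.fract_nonneg _
  have hwu : w' < u' := by
    rw [hu'eq, hw'eq]
    have : w / u < 1 / u := by gcongr
    linarith
  have hsnd : (ost (ost p)).2 = w' / u' := by
    rw [hostp, ost, if_neg (show ((u', w') : ℝ × ℝ).1 ≠ 0 from ne_of_gt hu'0)]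
    exact Int.fract_eq_self.mpr ⟨div_nonneg hw'0 hu'0.le, (div_lt_one hu'0).mpr hwu⟩
  rw [hsnd]
  -- 1 - w'/u' = (1-w)/(u*u'), and u*u' < 1/2
  have hdiff : u' - w' = (1 - w) / u := by
    rw [hu'eq, hw'eq]
    field_simp
    ring
  have huu' : u * u' = 1 - (a : ℝ) * u := by
    rw [hu'eq]
    field_simp
  have haR : (1 : ℝ) ≤ (a : ℝ) := by exact_mod_cast ha1
  have hhalf : u * u' < 1 / 2 := by nlinarith
  have huu'0 : 0 < u * u' := mul_pos h0 hu'0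
  have hval : 1 - w' / u' = (1 - w) / (u * u') := by
    have h2 : 1 - w = u * (u' - w') := by rw [hdiff]; field_simp
    rw [h2, mul_div_mul_left _ _ hne, sub_div, div_self hu'0.ne']
  rw [hval, lt_div_iff₀ huu'0]
  nlinarith

/-- It is impossible that the digits agree at every even (0-based) index. -/
lemma ost_not_all_eq {p : ℝ × ℝ} (h : OstInv p)
    (hall : ∀ k : ℕ, ⌊(1 : ℝ) / (ost^[2 * k] p).1⌋ =
      ⌊(ost^[2 * k] p).2 / (ost^[2 * k] p).1⌋) : False := by
  have hgrow : ∀ k : ℕ, 2 ^ k * (1 - p.2) ≤ 1 - (ost^[2 * k] p).2 := by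
    intro k
    induction k with
    | zero => simp
    | succ k ih =>
      have hstep : 2 * (1 - (ost^[2 * k] p).2) < 1 - (ost^[2 * (k + 1)] p).2 := by
        have h2 : ost^[2 * (k + 1)] p = ost (ost (ost^[2 * k] p)) := by
          have he : 2 * (k + 1) = 2 + 2 * k := by ring
          rw [he, Function.iterate_add_apply]
          rfl
        rw [h2]
        exact ost_key_step (ostInv_iterate h (2 * k)) (hall k)
      rw [pow_succ]
      nlinarith [ih, hstep]
  obtain ⟨k, hk⟩ := pow_unbounded_of_one_lt ((1 : ℝ) / (1 - p.2)) one_lt_two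
  have hy1 : p.2 < 1 := h.2.2.2.2
  have hy0' : 0 ≤ (ost^[2 * k] p).2 := (ostInv_iterate h (2 * k)).2.2.2.1
  have h1 : 1 < 2 ^ k * (1 - p.2) := by
    rw [div_lt_iff₀ (by linarith)] at hk
    linarith
  have := hgrow k
  linarith

/-- `a_i ≠ b_i` for infinitely many odd indices `i`
and infinitely many even indices `i`. -/
theorem ostrowski_digits_infinitely_neq (x y : ℝ) (hirr : Irrational x)
    (hx0 : 0 < x) (hx1 : x < 1) (hy0 : 0 ≤ y) (hy1 : y < 1) :
    {i : ℕ | 1 ≤ i ∧ Odd i ∧ adig x y (i - 1) ≠ bdig x y (i - 1)}.Infinite ∧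
    {i : ℕ | 1 ≤ i ∧ Even i ∧ adig x y (i - 1) ≠ bdig x y (i - 1)}.Infinite := by
  have hInv : OstInv (x, y) := ⟨hirr, hx0, hx1, hy0, hy1⟩
  have main : ∀ n : ℕ, ∃ k : ℕ, adig x y (n + 2 * k) ≠ bdig x y (n + 2 * k) := by
    intro n
    by_contra hcon
    push_neg at hcon
    apply ost_not_all_eq (ostInv_iterate hInv n)
    intro k
    have := hcon k
    rw [adig, bdig] at this
    rw [show n + 2 * k = 2 * k + n by ring, Function.iterate_add_apply] at this
    exact this
  constructor
  · -- odd indices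
    by_contra hfin
    rw [Set.not_infinite] at hfin
    obtain ⟨m, hm⟩ := hfin.bddAbove
    obtain ⟨k, hk⟩ := main (2 * m + 2)
    have hi : (2 * m + 3 + 2 * k) ∈
        {i : ℕ | 1 ≤ i ∧ Odd i ∧ adig x y (i - 1) ≠ bdig x y (i - 1)} := by
      refine ⟨by omega, ⟨m + 1 + k, by ring⟩, ?_⟩
      have : 2 * m + 3 + 2 * k - 1 = 2 * m + 2 + 2 * k := by omega
      rw [this]
      exact hk
    have := hm hi
    omega
  · -- even indices
    by_contra hfin
    rw [Set.not_infinite] at hfin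
    obtain ⟨m, hm⟩ := hfin.bddAbove
    obtain ⟨k, hk⟩ := main (2 * m + 1)
    have hi : (2 * m + 2 + 2 * k) ∈
        {i : ℕ | 1 ≤ i ∧ Even i ∧ adig x y (i - 1) ≠ bdig x y (i - 1)} := by
      refine ⟨by omega, ⟨m + 1 + k, by ring⟩, ?_⟩
      have : 2 * m + 2 + 2 * k - 1 = 2 * m + 1 + 2 * k := by omega
      rw [this]
      exact hk
    have := hm hi
    omega
end

section
/- Bounded distortion: there is a uniform constant L > 0 (e.g. L = 8) such that for every n ≥ 1, every sequence of admissible digit pairs (a_i,b_i) (a_i ≥ 1, 0 ≤ b_i ≤ a_i), and all (x_1,y_1), (x_2,y_2) ∈ [0,1]², one has 1/L ≤ |Jac h(x_1,y_1)| / |Jac h(x_2,y_2)| ≤ L, where h = h_{a_1,b_1} ∘ ⋯ ∘ h_{a_n,b_n}. -/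
open scoped BigOperators

/-- Inverse branch `h_{a,b}(x,y) = (1/(a+x), (b+y)/(a+x))` of the Ostrowski map. -/
noncomputable def hinv (a b : ℤ) (p : ℝ × ℝ) : ℝ × ℝ :=
  (1 / ((a : ℝ) + p.1), ((b : ℝ) + p.2) / ((a : ℝ) + p.1))

/-- `hcomp a b n = h_{a 1, b 1} ∘ ⋯ ∘ h_{a n, b n}`. -/
noncomputable def hcomp (a b : ℕ → ℤ) : ℕ → (ℝ × ℝ → ℝ × ℝ)
  | 0 => id
  | n + 1 => hcomp a b n ∘ hinv (a (n + 1)) (b (n + 1))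

/-- `qrec a n = q_{n-1}`, with `q_{-1} = 0`, `q_0 = 1`, `q_{k+1} = a_{k+1} q_k + q_{k-1}`. -/
def qrec (a : ℕ → ℤ) : ℕ → ℤ
  | 0 => 0
  | 1 => 1
  | n + 2 => a (n + 1) * qrec a (n + 1) + qrec a n

/-- `prec a n = p_{n-1}`, with `p_{-1} = 1`, `p_0 = 0`, `p_{k+1} = a_{k+1} p_k + p_{k-1}`. -/
def prec (a : ℕ → ℤ) : ℕ → ℤ
  | 0 => 1
  | 1 => 0
  | n + 2 => a (n + 1) * prec a (n + 1) + prec a n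

lemma det_eq (L : ℝ×ℝ →L[ℝ] ℝ×ℝ) :
    L.det = (L (1,0)).1 * (L (0,1)).2 - (L (1,0)).2 * (L (0,1)).1 := by
  have : L.det = LinearMap.det (L : ℝ×ℝ →ₗ[ℝ] ℝ×ℝ) := rfl
  rw [this, ← LinearMap.det_toMatrix (Module.Basis.finTwoProd ℝ), Matrix.det_fin_two]
  simp [LinearMap.toMatrix_apply]
  ring

lemma hinv_deriv (a b : ℤ) (p : ℝ×ℝ) (h : (a:ℝ) + p.1 ≠ 0) :
    ∃ D : ℝ×ℝ →L[ℝ] ℝ×ℝ, HasFDerivAt (hinv a b) D p ∧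
      D.det = -(((a:ℝ) + p.1)⁻¹)^3 := by
  have h1 : HasFDerivAt (fun q : ℝ×ℝ => (a:ℝ) + q.1)
      (ContinuousLinearMap.fst ℝ ℝ ℝ) p := by
    simpa using (hasFDerivAt_fst (𝕜 := ℝ) (p := p)).const_add (a:ℝ)
  have h2 : HasFDerivAt (fun q : ℝ×ℝ => (b:ℝ) + q.2)
      (ContinuousLinearMap.snd ℝ ℝ ℝ) p := by
    simpa using (hasFDerivAt_snd (𝕜 := ℝ) (p := p)).const_add (b:ℝ)
  have hi : HasFDerivAt (fun q : ℝ×ℝ => ((a:ℝ) + q.1)⁻¹)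
      ((ContinuousLinearMap.smulRight (1 : ℝ →L[ℝ] ℝ)
        (-(((a:ℝ) + p.1) ^ 2)⁻¹)).comp (ContinuousLinearMap.fst ℝ ℝ ℝ)) p :=
    (hasFDerivAt_inv h).comp p h1
  have hg := h2.mul hi
  have hfun : hinv a b = fun q : ℝ×ℝ =>
      (((a:ℝ) + q.1)⁻¹, ((b:ℝ) + q.2) * ((a:ℝ) + q.1)⁻¹) := by
    funext q; simp [hinv, one_div, div_eq_mul_inv]
  set Dinv := (ContinuousLinearMap.smulRight (1 : ℝ →L[ℝ] ℝ)
      (-(((a:ℝ) + p.1) ^ 2)⁻¹)).comp (ContinuousLinearMap.fst ℝ ℝ ℝ) with hDinv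
  refine ⟨Dinv.prod (((b:ℝ) + p.2) • Dinv + ((a:ℝ) + p.1)⁻¹ • ContinuousLinearMap.snd ℝ ℝ ℝ), ?_, ?_⟩
  · rw [hfun]; exact HasFDerivAt.prodMk hi hg
  rw [det_eq]
  simp [hDinv, ContinuousLinearMap.prod_apply]
  field_simp

lemma qrec_bounds (a : ℕ → ℤ) :
    ∀ n, (∀ i, 1 ≤ i → i ≤ n → 1 ≤ a i) →
      0 ≤ qrec a n ∧ qrec a n ≤ qrec a (n+1) ∧ 1 ≤ qrec a (n+1) := by
  intro n
  induction n with
  | zero => intro _; simp [qrec]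
  | succ m ih =>
    intro h
    obtain ⟨h0, h1, h2⟩ := ih (fun i hi1 hi2 => h i hi1 (hi2.trans (Nat.le_succ m)))
    have hA : 1 ≤ a (m+1) := h (m+1) (Nat.le_add_left 1 m) le_rfl
    have : qrec a (m+2) = a (m+1) * qrec a (m+1) + qrec a m := rfl
    refine ⟨le_trans h0 h1, ?_, ?_⟩
    · rw [this]; nlinarith
    · rw [this]; nlinarith

lemma det_comp (D1 D2 : ℝ×ℝ →L[ℝ] ℝ×ℝ) : (D1.comp D2).det = D1.det * D2.det := by
  have : (D1.comp D2).det = LinearMap.det ((D1 : ℝ×ℝ →ₗ[ℝ] ℝ×ℝ).comp (D2 : ℝ×ℝ →ₗ[ℝ] ℝ×ℝ)) := rfl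
  rw [this, LinearMap.det_comp]

lemma jac (n : ℕ) : ∀ (a b : ℕ → ℤ), (∀ i, 1 ≤ i → i ≤ n → 1 ≤ a i) →
    ∀ p : ℝ×ℝ, 0 ≤ p.1 → p.1 ≤ 1 →
    ∃ D : ℝ×ℝ →L[ℝ] ℝ×ℝ, HasFDerivAt (hcomp a b n) D p ∧
      D.det = (-1)^n / (((qrec a (n+1) : ℤ) : ℝ) + p.1 * ((qrec a n : ℤ) : ℝ))^3 := by
  induction n with
  | zero =>
    intro a b _ p _ _
    refine ⟨ContinuousLinearMap.id ℝ (ℝ×ℝ), hasFDerivAt_id p, ?_⟩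
    rw [det_eq]
    simp [qrec]
  | succ m ih =>
    intro a b ha p hp0 hp1
    have hA : 1 ≤ a (m+1) := ha (m+1) (Nat.le_add_left 1 m) le_rfl
    have hAr : (1:ℝ) ≤ (a (m+1) : ℝ) := by exact_mod_cast hA
    have hAx : (0:ℝ) < (a (m+1) : ℝ) + p.1 := by linarith
    obtain ⟨D1, hD1, hdet1⟩ := hinv_deriv (a (m+1)) (b (m+1)) p hAx.ne'
    set q := hinv (a (m+1)) (b (m+1)) p with hq
    have hq1 : q.1 = 1 / ((a (m+1) : ℝ) + p.1) := rfl
    have hq0 : 0 ≤ q.1 := by rw [hq1]; positivity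
    have hq1' : q.1 ≤ 1 := by
      rw [hq1, div_le_one hAx]; linarith
    obtain ⟨D2, hD2, hdet2⟩ := ih a b
      (fun i hi1 hi2 => ha i hi1 (hi2.trans (Nat.le_succ m))) q hq0 hq1'
    refine ⟨D2.comp D1, hD2.comp p hD1, ?_⟩
    rw [det_comp, hdet1, hdet2, hq1]
    obtain ⟨hQ0, hQ01, hQ1⟩ := qrec_bounds a m
      (fun i hi1 hi2 => ha i hi1 (hi2.trans (Nat.le_succ m)))
    have hQ0r : (0:ℝ) ≤ (qrec a m : ℝ) := by exact_mod_cast hQ0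
    have hQ1r : (1:ℝ) ≤ (qrec a (m+1) : ℝ) := by exact_mod_cast hQ1
    have hrec : ((qrec a (m+2) : ℤ) : ℝ) =
        (a (m+1) : ℝ) * (qrec a (m+1) : ℝ) + (qrec a m : ℝ) := by
      have : qrec a (m+2) = a (m+1) * qrec a (m+1) + qrec a m := rfl
      rw [this]; push_cast; ring
    rw [hrec]
    have hden : (0:ℝ) < (qrec a (m+1) : ℝ) + 1 / ((a (m+1) : ℝ) + p.1) * (qrec a m : ℝ) := by
      positivity
    have hden2 : (0:ℝ) < ((a (m+1) : ℝ) * (qrec a (m+1) : ℝ) + (qrec a m : ℝ))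
        + p.1 * (qrec a (m+1) : ℝ) := by nlinarith
    field_simp
    ring


/-- bounded distortion of the Jacobian of depth-`n` inverse branches. -/
theorem bounded_distortion :
    ∃ L : ℝ, 0 < L ∧
      ∀ (n : ℕ), 1 ≤ n → ∀ (a b : ℕ → ℤ),
        (∀ i, 1 ≤ i → i ≤ n → 1 ≤ a i ∧ 0 ≤ b i ∧ b i ≤ a i) →
        ∀ p₁ p₂ : ℝ × ℝ,
          p₁ ∈ Set.Icc (0 : ℝ) 1 ×ˢ Set.Icc (0 : ℝ) 1 →
          p₂ ∈ Set.Icc (0 : ℝ) 1 ×ˢ Set.Icc (0 : ℝ) 1 →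
          1 / L ≤ |(fderiv ℝ (hcomp a b n) p₁).det| / |(fderiv ℝ (hcomp a b n) p₂).det| ∧
          |(fderiv ℝ (hcomp a b n) p₁).det| / |(fderiv ℝ (hcomp a b n) p₂).det| ≤ L := by
  refine ⟨8, by norm_num, ?_⟩
  intro n _ a b hab p₁ p₂ hp₁ hp₂
  have ha : ∀ i, 1 ≤ i → i ≤ n → 1 ≤ a i := fun i h1 h2 => (hab i h1 h2).1
  obtain ⟨D₁, hD₁, hdet₁⟩ := jac n a b ha p₁ hp₁.1.1 hp₁.1.2
  obtain ⟨D₂, hD₂, hdet₂⟩ := jac n a b ha p₂ hp₂.1.1 hp₂.1.2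
  rw [hD₁.fderiv, hD₂.fderiv, hdet₁, hdet₂]
  obtain ⟨hQ0, hQ01, hQ1⟩ := qrec_bounds a n ha
  set Q0 := ((qrec a n : ℤ) : ℝ) with hQ0def
  set Q1 := ((qrec a (n+1) : ℤ) : ℝ) with hQ1def
  have hQ0r : (0:ℝ) ≤ Q0 := by rw [hQ0def]; exact_mod_cast hQ0
  have hQ1r : (1:ℝ) ≤ Q1 := by rw [hQ1def]; exact_mod_cast hQ1
  have hQ01r : Q0 ≤ Q1 := by rw [hQ0def, hQ1def]; exact_mod_cast hQ01
  set E₁ := Q1 + p₁.1 * Q0 with hE₁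
  set E₂ := Q1 + p₂.1 * Q0 with hE₂
  have h₁l : Q1 ≤ E₁ := by nlinarith [hp₁.1.1]
  have h₁u : E₁ ≤ 2 * Q1 := by nlinarith [hp₁.1.2]
  have h₂l : Q1 ≤ E₂ := by nlinarith [hp₂.1.1]
  have h₂u : E₂ ≤ 2 * Q1 := by nlinarith [hp₂.1.2]
  have hE₁p : (0:ℝ) < E₁ := by linarith
  have hE₂p : (0:ℝ) < E₂ := by linarith
  have habs : ∀ E : ℝ, 0 < E → |(-1:ℝ)^n / E^3| = 1 / E^3 := by
    intro E hE
    rw [abs_div, abs_pow, abs_neg, abs_one, one_pow, abs_of_pos (by positivity)]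
  rw [habs E₁ hE₁p, habs E₂ hE₂p]
  have hratio : (1 / E₁^3) / (1 / E₂^3) = E₂^3 / E₁^3 := by
    field_simp
  rw [hratio]
  have h12 : E₁ ≤ 2 * E₂ := by linarith
  have h21 : E₂ ≤ 2 * E₁ := by linarith
  have hc1 : E₁^3 ≤ (2*E₂)^3 := pow_le_pow_left₀ hE₁p.le h12 3
  have hc2 : E₂^3 ≤ (2*E₁)^3 := pow_le_pow_left₀ hE₂p.le h21 3
  have he1 : (2*E₂)^3 = 8 * E₂^3 := by ring
  have he2 : (2*E₁)^3 = 8 * E₁^3 := by ring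
  constructor
  · rw [div_le_div_iff₀ (by norm_num) (by positivity)]
    nlinarith
  · rw [div_le_iff₀ (by positivity)]
    nlinarith
end
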